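/- Let h be the 11-uniform morphism on {0,1,2,3} defined by h(0) = 01312021310, h(1) = 12023132021, h(2) = 23130203132, h(3) = 30201310203. The infinite fixed point h^ω(0) of h (obtained by iterating h starting from 0) contains no factor of length p with period q satisfying p/q > 3/2. -/

import Mathlib

/-- A word `x` has period `q` (with `1 ≤ q ≤ |x|`) if `x[i] = x[i+q]`
whenever both indices are in range. -/
def HasPeriod {A : Type*} (x : List A) (q : ℕ) : Prop :=
  1 ≤ q ∧ q ≤ x.length ∧ ∀ i : ℕ, i + q < x.length → x[i]? = x[i + q]?

/-- `w` contains an `e`-power: a nonempty factor of length `p` with period `q`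
and `p/q ≥ e`. -/
def ContainsPowGe {A : Type*} (w : List A) (e : ℚ) : Prop :=
  ∃ x : List A, ∃ q : ℕ, x ≠ [] ∧ x <:+: w ∧ HasPeriod x q ∧
    e ≤ (x.length : ℚ) / (q : ℚ)

/-- `w` contains an `e⁺`-power: a nonempty factor of length `p` with period `q`
and `p/q > e`. -/
def ContainsPowGt {A : Type*} (w : List A) (e : ℚ) : Prop :=
  ∃ x : List A, ∃ q : ℕ, x ≠ [] ∧ x <:+: w ∧ HasPeriod x q ∧
    e < (x.length : ℚ) / (q : ℚ)

/-- The critical exponent of `w` is exactly `e`: some nonempty factor has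
exponent at least `e`, and no nonempty factor has exponent exceeding `e`. -/
def CritExpIs {A : Type*} (w : List A) (e : ℚ) : Prop :=
  ContainsPowGe w e ∧ ¬ ContainsPowGt w e

/-- The 11-uniform palindromic morphism on {0,1,2,3}. -/
def hmor : List (Fin 4) → List (Fin 4) :=
  fun w => w.flatMap (fun a =>
    if a = 0 then [0, 1, 3, 1, 2, 0, 2, 1, 3, 1, 0]
    else if a = 1 then [1, 2, 0, 2, 3, 1, 3, 2, 0, 2, 1]
    else if a = 2 then [2, 3, 1, 3, 0, 2, 0, 3, 1, 3, 2]
    else [3, 0, 2, 0, 1, 3, 1, 0, 2, 0, 3])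

def img : Fin 4 → List (Fin 4) := fun a =>
  if a = 0 then [0, 1, 3, 1, 2, 0, 2, 1, 3, 1, 0]
  else if a = 1 then [1, 2, 0, 2, 3, 1, 3, 2, 0, 2, 1]
  else if a = 2 then [2, 3, 1, 3, 0, 2, 0, 3, 1, 3, 2]
  else [3, 0, 2, 0, 1, 3, 1, 0, 2, 0, 3]

lemma hmor_eq (w : List (Fin 4)) : hmor w = w.flatMap img := rfl

def bl (a : Fin 4) (r : ℕ) : Fin 4 := (img a).getD r 0

lemma img_length (a : Fin 4) : (img a).length = 11 := by
  fin_cases a <;> rfl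

lemma flat_idx (l : List (Fin 4)) : ∀ m, m < 11 * l.length →
    (l.flatMap img)[m]? = some (bl (l.getD (m / 11) 0) (m % 11)) := by
  induction l with
  | nil => intro m hm; simp at hm
  | cons a t ih =>
    intro m hm
    rw [List.flatMap_cons]
    rcases Nat.lt_or_ge m 11 with h | h
    · rw [List.getElem?_append_left (by rw [img_length]; exact h)]
      have h1 : m / 11 = 0 := Nat.div_eq_of_lt h
      have h2 : m % 11 = m := Nat.mod_eq_of_lt h
      rw [h1, h2]
      simp only [List.getD_cons_zero, bl]
      rw [List.getElem?_eq_getElem (by rw [img_length]; exact h)]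
      congr 1
      exact (List.getD_eq_getElem _ _ (by rw [img_length]; exact h)).symm
    · rw [List.getElem?_append_right (by rw [img_length]; exact h)]
      rw [img_length]
      have hm' : m - 11 < 11 * t.length := by simp [List.length_cons] at hm; omega
      rw [ih _ hm']
      have e1 : (m - 11) / 11 = m / 11 - 1 := by omega
      have e2 : (m - 11) % 11 = m % 11 := by omega
      have e3 : 1 ≤ m / 11 := by omega
      rw [e1, e2]
      congr 2
      rcases Nat.exists_eq_add_of_le e3 with ⟨j, hj⟩
      rw [hj]
      simp [Nat.add_comm 1 j]

lemma bl0 : ∀ a : Fin 4, bl a 0 = a := by decide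
lemma bl10 : ∀ a : Fin 4, bl a 10 = a := by decide

section WordW
variable (W : ℕ → Fin 4) (hW : ∀ n : ℕ, (List.range (11 ^ n)).map W = (hmor^[n]) [0])

include hW

lemma step (m : ℕ) : W m = bl (W (m / 11)) (m % 11) := by
  have hmn : m < 11 ^ m := Nat.lt_pow_self (by norm_num : 1 < 11)
  have h1 := hW m
  have h2 := hW (m + 1)
  rw [Function.iterate_succ_apply', ← h1, hmor_eq] at h2
  have hL : ((List.range (11 ^ (m+1))).map W)[m]? = some (W m) := by
    rw [List.getElem?_map, List.getElem?_range (by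
      calc m < 11 ^ m := hmn
      _ ≤ 11 ^ (m+1) := Nat.pow_le_pow_right (by norm_num) (Nat.le_succ m))]
    rfl
  have hR := flat_idx ((List.range (11 ^ m)).map W) m
    (by rw [List.length_map, List.length_range]; omega)
  rw [h2, hR] at hL
  have hd : m / 11 < 11 ^ m := lt_of_le_of_lt (Nat.div_le_self _ _) hmn
  have : ((List.range (11 ^ m)).map W).getD (m / 11) 0 = W (m / 11) := by
    rw [List.getD_eq_getElem _ _ (by simpa using hd)]
    simp
  rw [this] at hL
  exact (Option.some_injective _ hL).symm

lemma W0 (k : ℕ) : W (11 * k) = W k := by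
  have h := step W hW (11 * k)
  rw [Nat.mul_div_cancel_left _ (by norm_num), Nat.mul_mod_right, bl0] at h
  exact h

lemma W10 (k : ℕ) : W (11 * k + 10) = W k := by
  have h := step W hW (11 * k + 10)
  have e1 : (11 * k + 10) / 11 = k := by omega
  have e2 : (11 * k + 10) % 11 = 10 := by omega
  rw [e1, e2, bl10] at h
  exact h

end WordW

lemma sync_tbl : ∀ a b c : Fin 4, ∀ r : Fin 11, 0 < (r : ℕ) →
    ∃ j : Fin 11, bl a j ≠
      (if (j : ℕ) + r < 11 then bl b ((j : ℕ) + r) else bl c ((j : ℕ) + r - 11)) := by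
  decide

lemma adj_tbl : ∀ a : Fin 4, ∀ r : Fin 10, bl a r ≠ bl a ((r : ℕ) + 1) := by decide

lemma Wneq (W : ℕ → Fin 4) (hW : ∀ n : ℕ, (List.range (11 ^ n)).map W = (hmor^[n]) [0]) :
    ∀ k : ℕ, W k ≠ W (k + 1) := by
  intro k
  induction k using Nat.strong_induction_on with
  | _ k ih =>
    rcases Nat.lt_or_ge (k % 11) 10 with h | h
    · have h1 := step W hW k
      have h2 := step W hW (k + 1)
      have e1 : (k + 1) / 11 = k / 11 := by omega
      have e2 : (k + 1) % 11 = k % 11 + 1 := by omega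
      rw [e1, e2] at h2
      rw [h1, h2]
      exact adj_tbl (W (k / 11)) ⟨k % 11, h⟩
    · have h0 : k % 11 = 10 := by omega
      have hk : k = 11 * (k / 11) + 10 := by omega
      have hk1 : k + 1 = 11 * (k / 11 + 1) := by omega
      have h1 : W k = W (k / 11) := by have := W10 W hW (k / 11); rw [← hk] at this; exact this
      have h2 : W (k + 1) = W (k / 11 + 1) := by
        have := W0 W hW (k / 11 + 1); rw [← hk1] at this; exact this
      rw [h1, h2]
      exact ih (k / 11) (by omega)

def Per (W : ℕ → Fin 4) (i p q : ℕ) : Prop :=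
  ∀ m : ℕ, i ≤ m → m + q < i + p → W m = W (m + q)

lemma eleven_dvd (W : ℕ → Fin 4) (hW : ∀ n : ℕ, (List.range (11 ^ n)).map W = (hmor^[n]) [0])
    (i p q : ℕ) (hq : 41 ≤ q) (hp : 3 * q < 2 * p) (E : Per W i p q) : q % 11 = 0 := by
  by_contra hr
  set r : ℕ := q % 11 with hrdef
  have hr1 : 0 < r := Nat.pos_of_ne_zero hr
  have hr11 : r < 11 := Nat.mod_lt _ (by norm_num)
  have hp21 : q + 21 ≤ p := by omega
  set k : ℕ := (i + 10) / 11 with hkdef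
  have hik : i ≤ 11 * k := by omega
  have hki : 11 * k ≤ i + 10 := by omega
  obtain ⟨j, hj⟩ := sync_tbl (W k) (W (k + q / 11)) (W (k + q / 11 + 1)) ⟨r, hr11⟩ hr1
  apply hj
  have hjq := E (11 * k + (j : ℕ)) (by omega) (by omega)
  have h1 : W (11 * k + (j : ℕ)) = bl (W k) (j : ℕ) := by
    have := step W hW (11 * k + (j : ℕ))
    have e1 : (11 * k + (j : ℕ)) / 11 = k := by omega
    have e2 : (11 * k + (j : ℕ)) % 11 = (j : ℕ) := by omega
    rw [e1, e2] at this; exact this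
  have h2 : W (11 * k + (j : ℕ) + q) =
      if (j : ℕ) + r < 11 then bl (W (k + q / 11)) ((j : ℕ) + r)
      else bl (W (k + q / 11 + 1)) ((j : ℕ) + r - 11) := by
    have hst := step W hW (11 * k + (j : ℕ) + q)
    rcases Nat.lt_or_ge ((j : ℕ) + r) 11 with hc | hc
    · have e1 : (11 * k + (j : ℕ) + q) / 11 = k + q / 11 := by omega
      have e2 : (11 * k + (j : ℕ) + q) % 11 = (j : ℕ) + r := by omega
      rw [e1, e2] at hst
      rw [if_pos hc]; exact hst
    · have e1 : (11 * k + (j : ℕ) + q) / 11 = k + q / 11 + 1 := by omega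
      have e2 : (11 * k + (j : ℕ) + q) % 11 = (j : ℕ) + r - 11 := by omega
      rw [e1, e2] at hst
      rw [if_neg (by omega)]; exact hst
  rw [← h1, ← h2]
  exact hjq

lemma descent (W : ℕ → Fin 4) (hW : ∀ n : ℕ, (List.range (11 ^ n)).map W = (hmor^[n]) [0])
    (i p q : ℕ) (hq : 41 ≤ q) (hp : 3 * q < 2 * p) (E : Per W i p q) :
    ∃ q' p' i', 1 ≤ q' ∧ q' < q ∧ 3 * q' < 2 * p' ∧ Per W i' p' q' := by
  have hmod := eleven_dvd W hW i p q hq hp E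
  set q' : ℕ := q / 11 with hq'def
  have hqq : q = 11 * q' := by omega
  set a : ℕ := i / 11 with hadef
  set T : ℕ := (p - q - 1) / 11 with hTdef
  refine ⟨q', T + 1 + q', a, by omega, by omega, by omega, ?_⟩
  intro m ham hm
  have hmT : m ≤ a + T := by omega
  rcases Nat.eq_or_lt_of_le ham with he | hlt
  · -- m = a : use position 11*a + 10
    subst he
    have hE := E (11 * a + 10) (by omega) (by omega)
    have h1 : W (11 * a + 10) = W a := W10 W hW a
    have h2 : W (11 * a + 10 + q) = W (a + q') := by
      have : 11 * a + 10 + q = 11 * (a + q') + 10 := by omega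
      rw [this]; exact W10 W hW _
    rw [h1, h2] at hE; exact hE
  · have hE := E (11 * m) (by omega) (by omega)
    have h1 : W (11 * m) = W m := W0 W hW m
    have h2 : W (11 * m + q) = W (m + q') := by
      have : 11 * m + q = 11 * (m + q') := by omega
      rw [this]; exact W0 W hW _
    rw [h1, h2] at hE; exact hE

def noRun (w : ℕ) : List Bool → Bool
  | [] => true
  | b :: t => (((b :: t).take w).any (fun x => !x) || decide ((b :: t).length < w))
      && noRun w t

lemma noRun_spec (w : ℕ) (hw : 0 < w) : ∀ l : List Bool, noRun w l = true →
    ∀ s, s + w ≤ l.length → ∃ t, t < w ∧ l.getD (s + t) false = false := by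
  intro l
  induction l with
  | nil => intro _ s hs; simp at hs; omega
  | cons b tl ih =>
    intro hnr s hs
    rw [noRun] at hnr
    rw [Bool.and_eq_true] at hnr
    obtain ⟨hA, hB⟩ := hnr
    cases s with
    | zero =>
      rw [Bool.or_eq_true] at hA
      rcases hA with hA | hA
      · rw [List.any_eq_true] at hA
        obtain ⟨x, hmem, hx⟩ := hA
        obtain ⟨n, hn, hget⟩ := List.mem_iff_getElem.mp hmem
        have hnw : n < w := lt_of_lt_of_le hn (by simpa using List.length_take_le w (b :: tl))
        refine ⟨n, hnw, ?_⟩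
        have hlen : n < (b :: tl).length := lt_of_lt_of_le hn (by
          simpa using List.length_take_le' (l := b :: tl) (n := w))
        rw [List.getElem_take] at hget
        rw [Nat.zero_add, List.getD_eq_getElem _ _ hlen, hget]
        simpa using hx
      · rw [decide_eq_true_iff] at hA; omega
    | succ s' =>
      obtain ⟨t, htw, hget⟩ := ih hB s' (by simp at hs ⊢; omega)
      refine ⟨t, htw, ?_⟩
      have : s' + 1 + t = (s' + t) + 1 := by omega
      rw [this]
      simpa using hget

lemma hmor_length (l : List (Fin 4)) : (hmor l).length = 11 * l.length := by
  rw [hmor_eq]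
  induction l with
  | nil => rfl
  | cons a t ih => rw [List.flatMap_cons, List.length_append, ih, img_length]; simp; ring

def G (a b : Fin 4) (u : ℕ) : Fin 4 :=
  if u < 121 then bl (bl a (u / 11)) (u % 11) else bl (bl b ((u - 121) / 11)) ((u - 121) % 11)

lemma Gspec (a b : Fin 4) (u : ℕ) (hu : u < 242) :
    (hmor (hmor [a, b])).getD u 0 = G a b u := by
  have hab : hmor [a, b] = img a ++ img b := by
    rw [hmor_eq]; simp [List.flatMap_cons]
  have happ : hmor (img a ++ img b) = (img a).flatMap img ++ (img b).flatMap img := by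
    rw [hmor_eq, List.flatMap_append]
  have hlena : ((img a).flatMap img).length = 121 := by
    have := hmor_length (img a); rw [hmor_eq] at this; rw [this, img_length]
  have hlenb : ((img b).flatMap img).length = 121 := by
    have := hmor_length (img b); rw [hmor_eq] at this; rw [this, img_length]
  rw [hab, happ]
  rcases Nat.lt_or_ge u 121 with h | h
  · have hgl : ((img a).flatMap img ++ (img b).flatMap img)[u]? = ((img a).flatMap img)[u]? :=
      List.getElem?_append_left (by omega)
    have hfi := flat_idx (img a) u (by rw [img_length]; omega)
    have hga : (img a).getD (u / 11) 0 = bl a (u / 11) := rfl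
    rw [hga] at hfi
    rw [List.getD_eq_getElem?_getD, hgl, hfi, G, if_pos h]
    rfl
  · have hgl : ((img a).flatMap img ++ (img b).flatMap img)[u]? =
        ((img b).flatMap img)[u - 121]? := by
      rw [List.getElem?_append_right (by omega), hlena]
    have hfi := flat_idx (img b) (u - 121) (by rw [img_length]; omega)
    have hgb : (img b).getD ((u - 121) / 11) 0 = bl b ((u - 121) / 11) := rfl
    rw [hgb] at hfi
    rw [List.getD_eq_getElem?_getD, hgl, hfi, G, if_neg (by omega)]
    rfl

lemma dstep (W : ℕ → Fin 4) (hW : ∀ n : ℕ, (List.range (11 ^ n)).map W = (hmor^[n]) [0])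
    (m : ℕ) : W m = bl (bl (W (m / 121)) (m % 121 / 11)) (m % 121 % 11) := by
  have h1 := step W hW m
  have h2 := step W hW (m / 11)
  have e1 : m / 11 / 11 = m / 121 := by omega
  have e2 : m / 11 % 11 = m % 121 / 11 := by omega
  have e3 : m % 11 = m % 121 % 11 := by omega
  rw [e1, e2] at h2
  rw [h1, h2, e3]

def checkPair (a b : Fin 4) : Bool :=
  (List.range 40).all fun j =>
    noRun ((j+1) / 2 + 1)
      (List.zipWith (fun x y => decide (x = y)) (hmor (hmor [a, b]))
        ((hmor (hmor [a, b])).drop (j + 1)))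

set_option maxRecDepth 100000 in
set_option maxHeartbeats 4000000 in
lemma check_all : ∀ a b : Fin 4, a ≠ b → checkPair a b = true := by decide

lemma read_window (W : ℕ → Fin 4) (hW : ∀ n : ℕ, (List.range (11 ^ n)).map W = (hmor^[n]) [0])
    (i : ℕ) (u : ℕ) (hu : i % 121 ≤ u) (hu2 : u < 242) :
    W (i - i % 121 + u) = G (W (i / 121)) (W (i / 121 + 1)) u := by
  set K := i / 121 with hK
  set m := i - i % 121 + u with hm
  rcases Nat.lt_or_ge u 121 with h | h
  · have e1 : m / 121 = K := by omega
    have e2 : m % 121 = u := by omega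
    have := dstep W hW m
    rw [e1, e2] at this
    rw [this, G, if_pos h]
  · have e1 : m / 121 = K + 1 := by omega
    have e2 : m % 121 = u - 121 := by omega
    have := dstep W hW m
    rw [e1, e2] at this
    rw [this, G, if_neg (by omega)]

lemma zip_noRun_spec (L : List (Fin 4)) (q w s : ℕ) (hw : 0 < w)
    (hnr : noRun w (List.zipWith (fun x y => decide (x = y)) L (L.drop q)) = true)
    (hs : s + w + q ≤ L.length) :
    ∃ t, t < w ∧ L.getD (s + t) 0 ≠ L.getD (s + t + q) 0 := by
  set M : List Bool := List.zipWith (fun x y => decide (x = y)) L (L.drop q) with hMdef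
  have hMlen : M.length = L.length - q := by
    rw [hMdef, List.length_zipWith, List.length_drop]; omega
  obtain ⟨t, htw, hmt⟩ := noRun_spec w hw M hnr s (by omega)
  have hst : s + t < M.length := by omega
  have h1 : s + t < L.length := by omega
  have h2 : q + (s + t) < L.length := by omega
  have hMget : M.getD (s + t) false = decide (L[s + t]'h1 = L[q + (s + t)]'h2) := by
    rw [List.getD_eq_getElem?_getD, hMdef, List.getElem?_zipWith',
      List.getElem?_drop, List.getElem?_eq_getElem h1, List.getElem?_eq_getElem h2]
    rfl
  refine ⟨t, htw, ?_⟩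
  rw [hMget] at hmt
  have hne := of_decide_eq_false hmt
  rw [List.getD_eq_getElem _ _ h1, List.getD_eq_getElem _ _ (by omega : s + t + q < L.length)]
  intro hcon
  apply hne
  rw [hcon]
  congr 1
  omega

lemma base (W : ℕ → Fin 4) (hW : ∀ n : ℕ, (List.range (11 ^ n)).map W = (hmor^[n]) [0])
    (i p q : ℕ) (hq1 : 1 ≤ q) (hq40 : q ≤ 40) (hp : 3 * q < 2 * p) (E : Per W i p q) :
    False := by
  have hne : W (i / 121) ≠ W (i / 121 + 1) := Wneq W hW (i / 121)
  have hchk : checkPair (W (i / 121)) (W (i / 121 + 1)) = true := check_all _ _ hne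
  rw [checkPair, List.all_eq_true] at hchk
  have hnr := hchk (q - 1) (by rw [List.mem_range]; omega)
  have hq1' : q - 1 + 1 = q := by omega
  rw [hq1'] at hnr
  have hPlen : (hmor (hmor [W (i / 121), W (i / 121 + 1)])).length = 242 := by
    rw [hmor_length, hmor_length]; rfl
  obtain ⟨t, htw, hmt⟩ := zip_noRun_spec _ q (q / 2 + 1) (i % 121) (by omega) hnr (by omega)
  apply hmt
  have r1 := read_window W hW i (i % 121 + t) (by omega) (by omega)
  have r2 := read_window W hW i (i % 121 + t + q) (by omega) (by omega)
  have hi : i - i % 121 + (i % 121 + t) = i + t := by omega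
  have hi2 : i - i % 121 + (i % 121 + t + q) = i + t + q := by omega
  rw [hi] at r1
  rw [hi2] at r2
  have hE := E (i + t) (by omega) (by omega)
  rw [Gspec _ _ _ (by omega : i % 121 + t < 242), Gspec _ _ _ (by omega : i % 121 + t + q < 242)]
  rw [← r1, ← r2]
  exact hE

lemma main_no_pow (W : ℕ → Fin 4)
    (hW : ∀ n : ℕ, (List.range (11 ^ n)).map W = (hmor^[n]) [0]) :
    ∀ q, 1 ≤ q → ∀ p i, 3 * q < 2 * p → Per W i p q → False := by
  intro q
  induction q using Nat.strong_induction_on with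
  | _ q ih =>
    intro hq1 p i hp E
    rcases Nat.lt_or_ge q 41 with h | h
    · exact base W hW i p q hq1 (by omega) hp E
    · obtain ⟨q', p', i', hq'1, hq'lt, hp', E'⟩ := descent W hW i p q h hp E
      exact ih q' hq'lt hq'1 p' i' hp' E'


/-- The fixed point `h^ω(0)`, described as the infinite word `W` whose prefix
of length `11^n` is `h^n(0)` for every `n`, avoids `(3/2)⁺`-powers. -/
theorem hmor_fixed_point_avoids_32_plus (W : ℕ → Fin 4)
    (hW : ∀ n : ℕ, (List.range (11 ^ n)).map W = (hmor^[n]) [0]) :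
    ∀ x : List (Fin 4),
      (∃ i : ℕ, x = (List.range x.length).map (fun j => W (i + j))) →
      ∀ q : ℕ, HasPeriod x q → (x.length : ℚ) / (q : ℚ) ≤ 3 / 2 := by
  intro x ⟨i, hx⟩ q ⟨hq1, hqlen, hper⟩
  set p : ℕ := x.length with hpdef
  have hxj : ∀ j, j < p → x[j]? = some (W (i + j)) := by
    intro j hj
    conv_lhs => rw [hx]
    rw [List.getElem?_map, List.getElem?_range (by rw [hpdef] at hj; exact hj)]
    rfl
  have hE : Per W i p q := by
    intro m him hm
    have := hper (m - i) (by omega)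
    rw [hxj _ (by omega), hxj _ (by omega)] at this
    have heq := Option.some_injective _ this
    have e1 : i + (m - i) = m := by omega
    have e2 : i + (m - i + q) = m + q := by omega
    rw [e1, e2] at heq
    exact heq
  have hle : 2 * p ≤ 3 * q := by
    by_contra hcon
    exact main_no_pow W hW q hq1 p i (by omega) hE
  have hq0 : (0 : ℚ) < (q : ℚ) := by exact_mod_cast hq1
  rw [div_le_div_iff₀ hq0 (by norm_num)]
  have hle' : p * 2 ≤ 3 * q := by omega
  have : (p : ℚ) * 2 ≤ 3 * (q : ℚ) := by exact_mod_cast hle'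
  linarith
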